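/- Let η > 0 and β > 0, and let w : ℝ → ℝ be a nonnegative integrable function with ∫_ℝ w = 1 and w(t) = 0 for |t| > η. Then for every ζ ∈ ℝ, | ∫_ℝ w(t) e^{−itζ} dt − 1 | ≤ 2 η^{β/(β+1)} (1 + ζ²)^{β/2}. -/

import Mathlib

open MeasureTheory

private lemma exp_pt_bound (x : ℝ) :
    ‖Complex.exp (-(Complex.I * (x : ℂ))) - 1‖ ≤ 2 * min 1 |x| := by
  by_cases h : |x| ≤ 1
  · have h1 : ‖(-(Complex.I * (x : ℂ)))‖ = |x| := by
      simp [Complex.norm_def, Real.sqrt_mul_self_eq_abs]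
    have := Complex.norm_exp_sub_one_le (x := -(Complex.I * (x : ℂ))) (by rw [h1]; exact h)
    rw [h1] at this
    simpa [min_eq_right h] using this
  · push_neg at h
    have h2 : ‖Complex.exp (-(Complex.I * (x : ℂ)))‖ = 1 := by
      have : -(Complex.I * (x : ℂ)) = ((-x : ℝ) : ℂ) * Complex.I := by push_cast; ring
      rw [this]
      exact Complex.norm_exp_ofReal_mul_I _
    calc ‖Complex.exp (-(Complex.I * (x : ℂ))) - 1‖
        ≤ ‖Complex.exp (-(Complex.I * (x : ℂ)))‖ + ‖(1:ℂ)‖ := norm_sub_le _ _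
      _ = 2 := by rw [h2]; norm_num
      _ = 2 * min 1 |x| := by rw [min_eq_left h.le]; ring

private lemma num_bound (η β ζ : ℝ) (hη : 0 < η) (hβ : 0 < β) :
    2 * min 1 (η * |ζ|) ≤ 2 * η ^ (β / (β + 1)) * (1 + ζ ^ 2) ^ (β / 2) := by
  have hb1 : 0 < β + 1 := by linarith
  have hbase : (1:ℝ) ≤ 1 + ζ ^ 2 := by nlinarith [sq_nonneg ζ]
  have hP : (1:ℝ) ≤ (1 + ζ ^ 2) ^ (β / 2) :=
    Real.one_le_rpow hbase (by positivity)
  set A := η ^ (β / (β + 1)) * (1 + ζ ^ 2) ^ (β / 2) with hA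
  rw [mul_assoc, ← hA]
  by_cases hA1 : 1 ≤ A
  · have : min 1 (η * |ζ|) ≤ 1 := min_le_left _ _
    nlinarith
  · push_neg at hA1
    have hpow : (0:ℝ) < η ^ (β / (β + 1)) := by positivity
    have hαA : η ^ (β / (β + 1)) ≤ A := by
      rw [hA]
      nlinarith
    have hPlt : (1 + ζ ^ 2) ^ (β / 2) < (η ^ (β / (β + 1)))⁻¹ := by
      rw [lt_inv_comm₀ (by positivity) hpow]
      calc η ^ (β / (β + 1)) = A * ((1 + ζ ^ 2) ^ (β / 2))⁻¹ := by
            rw [hA]; field_simp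
        _ < 1 * ((1 + ζ ^ 2) ^ (β / 2))⁻¹ := by
            apply mul_lt_mul_of_pos_right hA1 (by positivity)
        _ = ((1 + ζ ^ 2) ^ (β / 2))⁻¹ := one_mul _
    have hζle : |ζ| ≤ (1 + ζ ^ 2) ^ ((1:ℝ) / 2) := by
      rw [← Real.sqrt_eq_rpow]
      rw [← Real.sqrt_sq_eq_abs]
      exact Real.sqrt_le_sqrt (by nlinarith)
    have hkey : (1 + ζ ^ 2) ^ ((1:ℝ)/2) < η ^ (-(1 / (β + 1))) := by
      have h1 : (1 + ζ ^ 2) ^ ((1:ℝ)/2) = ((1 + ζ ^ 2) ^ (β / 2)) ^ ((1:ℝ)/β) := by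
        rw [← Real.rpow_mul (by linarith)]
        congr 1
        field_simp
      have h2 : ((η ^ (β / (β + 1)))⁻¹) ^ ((1:ℝ)/β) = η ^ (-(1 / (β + 1))) := by
        rw [← Real.rpow_neg_one, ← Real.rpow_mul hη.le, ← Real.rpow_mul hη.le]
        congr 1
        field_simp
      rw [h1, ← h2]
      exact Real.rpow_lt_rpow (by positivity) hPlt (by positivity)
    have hfin : η * |ζ| < η ^ (β / (β + 1)) := by
      calc η * |ζ| ≤ η * (1 + ζ ^ 2) ^ ((1:ℝ)/2) :=
            mul_le_mul_of_nonneg_left hζle hη.le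
        _ < η * η ^ (-(1 / (β + 1))) := mul_lt_mul_of_pos_left hkey hη
        _ = η ^ (β / (β + 1)) := by
            nth_rewrite 1 [← Real.rpow_one η]
            rw [← Real.rpow_add hη]
            congr 1
            field_simp; ring
    have : min 1 (η * |ζ|) ≤ A := le_trans (min_le_right _ _) (le_trans hfin.le hαA)
    linarith

/-- For a nonnegative mollifier `w` of mass `1` supported in `[−η, η]`, the Fourier transform
satisfies `|ŵ(ζ) − 1| ≤ 2 η^{β/(β+1)} (1 + ζ²)^{β/2}`. -/
theorem stmt_15
    (η β : ℝ) (hη : 0 < η) (hβ : 0 < β)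
    (w : ℝ → ℝ) (hw_nonneg : ∀ t, 0 ≤ w t) (hw_int : Integrable w)
    (hw_one : (∫ t, w t) = 1) (hw_supp : ∀ t : ℝ, η < |t| → w t = 0)
    (ζ : ℝ) :
    ‖(∫ t : ℝ, (w t : ℂ) * Complex.exp (-(Complex.I * ((t * ζ : ℝ) : ℂ)))) - 1‖
      ≤ 2 * η ^ (β / (β + 1)) * (1 + ζ ^ 2) ^ (β / 2) := by
  set e : ℝ → ℂ := fun t => Complex.exp (-(Complex.I * ((t * ζ : ℝ) : ℂ))) with he
  have hwc_int : Integrable (fun t => (w t : ℂ)) := hw_int.ofReal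
  have he_cont : Continuous e := by
    apply Complex.continuous_exp.comp
    fun_prop
  have hprod_int : Integrable (fun t => (w t : ℂ) * e t) := by
    have := hwc_int.bdd_mul he_cont.aestronglyMeasurable (c := 1) (Filter.Eventually.of_forall fun t => by
      simp only [he]
      have : -(Complex.I * ((t * ζ : ℝ) : ℂ)) = ((-(t * ζ) : ℝ) : ℂ) * Complex.I := by
        push_cast; ring
      rw [this, Complex.norm_exp_ofReal_mul_I])
    simpa [mul_comm] using this
  have hwc_one : (∫ t, (w t : ℂ)) = 1 := by
    simpa [hw_one] using (integral_ofReal (f := w) (𝕜 := ℂ) (μ := volume))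
  have hsplit : (∫ t : ℝ, (w t : ℂ) * e t) - 1 =
      ∫ t : ℝ, ((w t : ℂ) * e t - (w t : ℂ)) := by
    rw [integral_sub hprod_int hwc_int, hwc_one]
  have heq : (fun t : ℝ => (w t : ℂ) * e t - (w t : ℂ)) =
      fun t : ℝ => (w t : ℂ) * (e t - 1) := by
    ext t; ring
  rw [hsplit, heq]
  set c : ℝ := 2 * min 1 (η * |ζ|) with hc
  have hbound : ∀ t : ℝ, ‖(w t : ℂ) * (e t - 1)‖ ≤ w t * c := by
    intro t
    rcases le_or_gt |t| η with h | h
    · rw [norm_mul, Complex.norm_real, Real.norm_eq_abs, abs_of_nonneg (hw_nonneg t)]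
      apply mul_le_mul_of_nonneg_left _ (hw_nonneg t)
      calc ‖e t - 1‖ ≤ 2 * min 1 |t * ζ| := exp_pt_bound (t * ζ)
        _ ≤ c := by
          rw [hc]
          have h1 : |t * ζ| ≤ η * |ζ| := by
            rw [abs_mul]
            exact mul_le_mul_of_nonneg_right h (abs_nonneg ζ)
          have : min 1 |t * ζ| ≤ min 1 (η * |ζ|) :=
            min_le_min le_rfl h1
          linarith
    · rw [hw_supp t h]
      simp
  have hc_nonneg : 0 ≤ c := by
    rw [hc]
    have : (0:ℝ) ≤ min 1 (η * |ζ|) := le_min one_pos.le (by positivity)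
    linarith
  calc ‖∫ t : ℝ, (w t : ℂ) * (e t - 1)‖ ≤ ∫ t : ℝ, w t * c :=
        norm_integral_le_of_norm_le (hw_int.mul_const c) (Filter.Eventually.of_forall hbound)
    _ = c := by rw [integral_mul_const, hw_one, one_mul]
    _ ≤ 2 * η ^ (β / (β + 1)) * (1 + ζ ^ 2) ^ (β / 2) := num_bound η β ζ hη hβ
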